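/- For every real s ≥ 0 and every M ∈ ℕ with 2s < 2^M, the van der Corput sequence in base 2 satisfies F_{2^M}(s) = 2⌊s⌋. -/

import Mathlib

open scoped Classical

/-- Radical-inverse function in base 2. -/
noncomputable def g2 (n : ℕ) : ℝ :=
  ∑ j ∈ Finset.range (n + 1), (if n.testBit j then ((2 : ℝ) ^ (j + 1))⁻¹ else 0)

/-- Van der Corput sequence in base 2, indexed from 1, with x₁ = 0. -/
noncomputable def vdc (i : ℕ) : ℝ := g2 (i - 1)

/-- Distance to the nearest integer. -/
noncomputable def nint (x : ℝ) : ℝ := |x - round x|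

/-- Finite empiric pair correlation function of the van der Corput sequence in base 2. -/
noncomputable def F (N : ℕ) (s : ℝ) : ℝ :=
  (((Finset.Icc 1 N ×ˢ Finset.Icc 1 N).filter
      (fun p => p.1 ≠ p.2 ∧ nint (vdc p.1 - vdc p.2) ≤ s / N)).card : ℝ) / N

def rev2 (M n : ℕ) : ℕ := ∑ j ∈ Finset.range M, if n.testBit j then 2^(M-1-j) else 0

lemma rev2_lt (M n : ℕ) : rev2 M n < 2^M := by
  have h1 : rev2 M n ≤ ∑ j ∈ Finset.range M, 2^(M-1-j) := by
    apply Finset.sum_le_sum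
    intro j _
    split <;> simp
  have h2 : ∑ j ∈ Finset.range M, 2^(M-1-j) = ∑ j ∈ Finset.range M, 2^j :=
    Finset.sum_range_reflect (fun j => 2^j) M
  have h3 := Nat.geomSum_eq (le_refl 2) M
  have : 1 ≤ 2^M := Nat.one_le_two_pow
  omega

lemma sum_bits_inj : ∀ (M : ℕ) (b c : ℕ → Bool),
    (∑ j ∈ Finset.range M, if b j then 2^j else 0) =
    (∑ j ∈ Finset.range M, if c j then 2^j else 0) →
    ∀ j < M, b j = c j := by
  intro M
  induction M with
  | zero => intro b c _ j hj; omega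
  | succ M ih =>
    intro b c h j hj
    rw [Finset.sum_range_succ', Finset.sum_range_succ'] at h
    have hb2 : ∀ (b : ℕ → Bool), (∑ j ∈ Finset.range M, if b (j+1) then 2^(j+1) else 0)
        = 2 * ∑ j ∈ Finset.range M, if b (j+1) then 2^j else 0 := by
      intro b; rw [Finset.mul_sum]
      refine Finset.sum_congr rfl fun j _ => ?_
      cases b (j+1) <;> simp [pow_succ, mul_comm]
    rw [hb2 b, hb2 c] at h
    have h0 : b 0 = c 0 := by
      cases hb : b 0 <;> cases hc : c 0 <;> rw [hb, hc] at h <;> simp at h ⊢ <;> omega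
    have hA : (∑ j ∈ Finset.range M, if b (j+1) then 2^j else 0)
        = ∑ j ∈ Finset.range M, if c (j+1) then 2^j else 0 := by
      cases hb : b 0 <;> cases hc : c 0 <;> rw [hb, hc] at h <;> simp at h <;> omega
    match j, hj with
    | 0, _ => exact h0
    | j+1, hj => exact ih (fun k => b (k+1)) (fun k => c (k+1)) hA j (by omega)

lemma rev2_reflect (M n : ℕ) :
    rev2 M n = ∑ k ∈ Finset.range M, if n.testBit (M-1-k) then 2^k else 0 := by
  rw [rev2, ← Finset.sum_range_reflect (fun k => if n.testBit (M-1-k) then 2^k else 0) M]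
  refine Finset.sum_congr rfl fun j hj => ?_
  have hj' : j < M := Finset.mem_range.mp hj
  have : M - 1 - (M - 1 - j) = j := by omega
  rw [this]

lemma rev2_inj {M a b : ℕ} (ha : a < 2^M) (hb : b < 2^M) (h : rev2 M a = rev2 M b) :
    a = b := by
  rw [rev2_reflect, rev2_reflect] at h
  have hbits := sum_bits_inj M (fun k => a.testBit (M-1-k)) (fun k => b.testBit (M-1-k)) h
  apply Nat.eq_of_testBit_eq
  intro j
  by_cases hjM : j < M
  · have := hbits (M-1-j) (by omega)
    simpa [show M - 1 - (M - 1 - j) = j by omega] using this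
  · rw [Nat.testBit_lt_two_pow, Nat.testBit_lt_two_pow]
    · exact lt_of_lt_of_le hb (Nat.pow_le_pow_right (by norm_num) (by omega))
    · exact lt_of_lt_of_le ha (Nat.pow_le_pow_right (by norm_num) (by omega))

lemma g2_eq {M n : ℕ} (hn : n < 2^M) : g2 n = (rev2 M n : ℝ) / 2^M := by
  have hfull : ∀ (m : ℕ), n + 1 ≤ m → g2 n
      = ∑ j ∈ Finset.range m, (if n.testBit j then ((2 : ℝ) ^ (j + 1))⁻¹ else 0) := by
    intro m hm
    rw [g2]
    apply Finset.sum_subset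
    · exact Finset.range_subset_range.mpr hm
    · intro j _ hj
      have hj' : n + 1 ≤ j := Nat.le_of_not_lt (by simpa using hj)
      have : n.testBit j = false := Nat.testBit_lt_two_pow
        (lt_of_lt_of_le (Nat.lt_two_pow_self (n := n)) (Nat.pow_le_pow_right (by norm_num) (by omega)))
      simp [this]
  rw [hfull (max (n+1) M) (le_max_left _ _)]
  have h2 : (rev2 M n : ℝ) = ∑ j ∈ Finset.range (max (n+1) M),
      (if n.testBit j then ((2:ℝ)^(M-1-j)) else 0) := by
    rw [rev2]
    push_cast
    rw [Finset.sum_subset (Finset.range_subset_range.mpr (le_max_right _ _))]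
    intro j _ hj
    have hjM : M ≤ j := Nat.le_of_not_lt (by simpa using hj)
    have : n.testBit j = false := Nat.testBit_lt_two_pow
      (lt_of_lt_of_le hn (Nat.pow_le_pow_right (by norm_num) hjM))
    simp [this]
  rw [h2, Finset.sum_div]
  refine Finset.sum_congr rfl fun j hj => ?_
  by_cases hb : n.testBit j
  · have hjM : j < M := by
      by_contra hc
      exact absurd (Nat.testBit_lt_two_pow
        (lt_of_lt_of_le hn (Nat.pow_le_pow_right (by norm_num) (Nat.le_of_not_lt hc)))) (by simp [hb])
    simp only [hb, if_true]
    rw [eq_div_iff (by positivity)]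
    rw [inv_mul_eq_div, div_eq_iff (by positivity : (0:ℝ) < 2^(j+1)).ne', ← pow_add]
    congr 1
    omega
  · simp [hb]

lemma nint_add_int (x : ℝ) (k : ℤ) : nint (x + k) = nint x := by
  rw [nint, nint, round_add_intCast]
  push_cast
  ring_nf

lemma nint_div {N d : ℕ} (hN : 0 < N) (hd : d < N) :
    nint ((d:ℝ)/N) = ((min d (N-d) : ℕ) : ℝ)/N := by
  have hN' : (0:ℝ) < N := by exact_mod_cast hN
  by_cases h2 : 2*d < N
  · have hlt : (d:ℝ)/N < 1/2 := by
      rw [div_lt_div_iff₀ hN' (by norm_num)]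
      push_cast
      exact_mod_cast by push_cast; nlinarith [show (2*d:ℝ) < N by exact_mod_cast h2]
    have hr : round ((d:ℝ)/N) = 0 := by
      rw [round_eq]
      apply Int.floor_eq_zero_iff.mpr
      constructor
      · positivity
      · linarith
    rw [nint, hr]
    have hmin : min d (N-d) = d := by omega
    rw [hmin]
    simp [abs_of_nonneg (by positivity : (0:ℝ) ≤ (d:ℝ)/N)]
  · push_neg at h2
    have hge : (1:ℝ)/2 ≤ (d:ℝ)/N := by
      rw [div_le_div_iff₀ (by norm_num) hN']
      exact_mod_cast by push_cast; nlinarith [show (N:ℝ) ≤ 2*d by exact_mod_cast h2]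
    have hlt1 : (d:ℝ)/N < 1 := by
      rw [div_lt_one hN']
      exact_mod_cast hd
    have hr : round ((d:ℝ)/N) = 1 := by
      rw [round_eq]
      apply Int.floor_eq_iff.mpr
      constructor
      · push_cast; linarith
      · push_cast; linarith
    rw [nint, hr]
    have hmin : min d (N-d) = N - d := by omega
    rw [hmin]
    rw [abs_of_nonpos (by push_cast; linarith)]
    rw [Nat.cast_sub (le_of_lt hd)]
    push_cast
    field_simp
    ring

lemma nint_frac {N a b : ℕ} (hN : 0 < N) (ha : a < N) (hb : b < N) :
    nint ((a:ℝ)/N - (b:ℝ)/N)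
      = ((min ((a+N-b)%N) (N - (a+N-b)%N) : ℕ) : ℝ)/N := by
  have hN' : (0:ℝ) < N := by exact_mod_cast hN
  set d := (a+N-b) % N with hd
  have hdlt : d < N := Nat.mod_lt _ hN
  have hq := Nat.div_add_mod (a+N-b) N
  set q := (a+N-b)/N with hqdef
  have hble : b ≤ a + N := by omega
  have h1 : (N:ℝ)*q + d = (a:ℝ) + N - b := by
    have h1' : ((N*q + d : ℕ) : ℝ) = ((a + N - b : ℕ):ℝ) := by exact_mod_cast hq
    push_cast [Nat.cast_sub hble] at h1'
    linarith
  have hsplit : (a:ℝ)/N - (b:ℝ)/N = (d:ℝ)/N + (((q:ℤ) - 1 : ℤ):ℝ) := by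
    field_simp
    push_cast
    linarith
  rw [hsplit, nint_add_int, nint_div hN hdlt]

lemma mod_inj {N x u v : ℕ} (hN : 0 < N) (hu : u < N) (hv : v < N)
    (h : (x + N - u) % N = (x + N - v) % N) : u = v := by
  rcases le_total u v with huv | huv
  · have h1 : x + N - v ≤ x + N - u := by omega
    have h2 : (x + N - u) - (x + N - v) = v - u := by omega
    have hdvd : N ∣ (x + N - u) - (x + N - v) := (Nat.modEq_iff_dvd' h1).mp h.symm
    rw [h2] at hdvd
    have := Nat.eq_zero_of_dvd_of_lt hdvd
    omega
  · have h1 : x + N - u ≤ x + N - v := by omega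
    have h2 : (x + N - v) - (x + N - u) = u - v := by omega
    have hdvd : N ∣ (x + N - v) - (x + N - u) := (Nat.modEq_iff_dvd' h1).mp h
    rw [h2] at hdvd
    have := Nat.eq_zero_of_dvd_of_lt hdvd
    omega

lemma mod_roundtrip {N y e : ℕ} (hN : 0 < N) (hy : y < N) (he1 : 1 ≤ e) (he2 : e < N) :
    (y + N - ((y + N - e) % N)) % N = e := by
  set w := y + N - e with hw
  by_cases hwN : w < N
  · rw [Nat.mod_eq_of_lt hwN]
    have h3 : y + N - w = e := by omega
    rw [h3, Nat.mod_eq_of_lt he2]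
  · have hmod : w % N = w - N := by
      rw [Nat.mod_eq_sub_mod (by omega), Nat.mod_eq_of_lt (by omega)]
    rw [hmod]
    have h3 : y + N - (w - N) = e + N := by omega
    rw [h3, Nat.add_mod_right, Nat.mod_eq_of_lt he2]

lemma cond_iff {s : ℝ} (hs : 0 ≤ s) {N a b : ℕ} (hN : 0 < N) (h2s : 2*s < (N:ℝ))
    (ha : a < N) (hb : b < N) :
    (a ≠ b ∧ nint ((a:ℝ)/N - (b:ℝ)/N) ≤ s/N) ↔
    ((a+N-b) % N ∈ Finset.Icc 1 ⌊s⌋₊ ∪ Finset.Icc (N - ⌊s⌋₊) (N-1)) := by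
  have hN' : (0:ℝ) < N := by exact_mod_cast hN
  set K := ⌊s⌋₊ with hK
  have hKs : (K:ℝ) ≤ s := Nat.floor_le hs
  have hKN : 2*K < N := by
    by_contra hc
    push_neg at hc
    have : (N:ℝ) ≤ 2*K := by exact_mod_cast hc
    linarith
  set d := (a+N-b) % N with hd
  have hdlt : d < N := Nat.mod_lt _ hN
  have hab : a ≠ b ↔ d ≠ 0 := by
    constructor
    · intro hne h0
      have hdvd : N ∣ (a+N-b) := Nat.dvd_of_mod_eq_zero h0
      obtain ⟨c, hc⟩ := hdvd
      have h1 : 0 < a + N - b := by omega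
      have h2 : a + N - b < 2*N := by omega
      have hc1 : c = 1 := by
        rcases Nat.lt_or_ge c 1 with h' | h'
        · interval_cases c; omega
        · rcases Nat.lt_or_ge c 2 with h'' | h'' 
          · omega
          · exfalso
            have : 2*N ≤ N*c := by nlinarith
            omega
      rw [hc1, mul_one] at hc
      omega
    · intro hne heq
      apply hne
      rw [hd, heq]
      have h' : b + N - b = N := by omega
      rw [h', Nat.mod_self]
  have hcond : nint ((a:ℝ)/N - (b:ℝ)/N) ≤ s/N ↔ min d (N-d) ≤ K := by
    rw [nint_frac hN ha hb, ← hd]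
    rw [div_le_div_iff_of_pos_right hN']
    rw [← Nat.le_floor_iff hs, ← hK]
  rw [hab, hcond]
  simp only [Finset.mem_union, Finset.mem_Icc]
  omega

theorem stmt19 (s : ℝ) (hs : 0 ≤ s) (M : ℕ) (h : 2 * s < 2 ^ M) :
    F (2 ^ M) s = 2 * (⌊s⌋ : ℝ) := by
  set N := 2^M with hNdef
  have hN : 0 < N := Nat.two_pow_pos M
  have hN' : (0:ℝ) < (N:ℝ) := by exact_mod_cast hN
  set K := ⌊s⌋₊ with hK
  have hKs : (K:ℝ) ≤ s := Nat.floor_le hs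
  have h2s : 2*s < (N:ℝ) := by rw [hNdef]; push_cast; exact h
  have hKN : 2*K < N := by
    by_contra hc
    push_neg at hc
    have : (N:ℝ) ≤ 2*K := by exact_mod_cast hc
    linarith
  set D := Finset.Icc 1 K ∪ Finset.Icc (N - K) (N-1) with hD
  have hDcard : D.card = 2*K := by
    rw [hD, Finset.card_union_of_disjoint, Nat.card_Icc, Nat.card_Icc]
    · omega
    · rw [Finset.disjoint_left]
      intro x hx hx'
      simp only [Finset.mem_Icc] at hx hx'
      omega
  have hvdc : ∀ i ∈ Finset.Icc 1 N, vdc i = ((rev2 M (i-1) : ℕ) : ℝ)/N := by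
    intro i hi
    simp only [Finset.mem_Icc] at hi
    rw [vdc, g2_eq (show i - 1 < 2^M by omega)]
    rw [hNdef]
    push_cast
    ring
  have hrevlt : ∀ i ∈ Finset.Icc 1 N, rev2 M (i-1) < N := fun i _ => rev2_lt M (i-1)
  have hsurj : ∀ y < N, ∃ i ∈ Finset.Icc 1 N, rev2 M (i-1) = y := by
    have hh := Finset.surj_on_of_inj_on_of_card_le (s := Finset.range N) (t := Finset.range N)
      (fun n _ => rev2 M n) (fun n _ => Finset.mem_range.mpr (rev2_lt M n))
      (fun a b ha hb hab => rev2_inj (Finset.mem_range.mp ha) (Finset.mem_range.mp hb) hab)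
      le_rfl
    intro y hy
    obtain ⟨n, hn, hny⟩ := hh y (Finset.mem_range.mpr hy)
    refine ⟨n+1, Finset.mem_Icc.mpr ⟨by omega, by have := Finset.mem_range.mp hn; omega⟩, ?_⟩
    simpa using hny.symm
  have hcard : ((Finset.Icc 1 N ×ˢ Finset.Icc 1 N).filter
      (fun p => p.1 ≠ p.2 ∧ nint (vdc p.1 - vdc p.2) ≤ s / N)).card
      = (Finset.range N ×ˢ D).card := by
    apply Finset.card_bij
      (fun p _ => (rev2 M (p.1 - 1), (rev2 M (p.1-1) + N - rev2 M (p.2-1)) % N))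
    · -- maps into target
      intro p hp
      simp only [Finset.mem_filter, Finset.mem_product] at hp
      obtain ⟨⟨hp1, hp2⟩, hne, hcnd⟩ := hp
      have h1 := Finset.mem_Icc.mp hp1
      have h2 := Finset.mem_Icc.mp hp2
      have ha := hrevlt p.1 hp1
      have hb := hrevlt p.2 hp2
      rw [Finset.mem_product]
      constructor
      · exact Finset.mem_range.mpr ha
      · rw [hD]
        apply (cond_iff hs hN h2s ha hb).mp
        constructor
        · intro hEq
          apply hne
          have := rev2_inj (M := M) (show p.1 - 1 < 2^M by rw [← hNdef]; omega)
            (show p.2 - 1 < 2^M by rw [← hNdef]; omega) hEq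
          omega
        · rw [← hvdc p.1 hp1, ← hvdc p.2 hp2]
          exact hcnd
    · -- injective
      intro p hp q hq hpq
      simp only [Finset.mem_filter, Finset.mem_product] at hp hq
      obtain ⟨⟨hp1, hp2⟩, -⟩ := hp
      obtain ⟨⟨hq1, hq2⟩, -⟩ := hq
      have hip := Finset.mem_Icc.mp hp1
      have hjp := Finset.mem_Icc.mp hp2
      have hiq := Finset.mem_Icc.mp hq1
      have hjq := Finset.mem_Icc.mp hq2
      have h1 : rev2 M (p.1-1) = rev2 M (q.1-1) := congrArg Prod.fst hpq
      have hx1 : p.1 = q.1 := by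
        have := rev2_inj (M := M) (show p.1 - 1 < 2^M by rw [← hNdef]; omega)
          (show q.1 - 1 < 2^M by rw [← hNdef]; omega) h1
        omega
      have h2 : (rev2 M (p.1-1) + N - rev2 M (p.2-1)) % N
          = (rev2 M (q.1-1) + N - rev2 M (q.2-1)) % N := congrArg Prod.snd hpq
      rw [← hx1] at h2
      have hu := mod_inj hN (hrevlt p.2 hp2) (hrevlt q.2 hq2) h2
      have hx2 : p.2 = q.2 := by
        have := rev2_inj (M := M) (show p.2 - 1 < 2^M by rw [← hNdef]; omega)
          (show q.2 - 1 < 2^M by rw [← hNdef]; omega) hu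
        omega
      exact Prod.ext hx1 hx2
    · -- surjective
      intro q hq
      rw [Finset.mem_product] at hq
      obtain ⟨hy, he⟩ := hq
      have hy' := Finset.mem_range.mp hy
      have heD : q.2 ∈ D := he
      have he1 : 1 ≤ q.2 ∧ q.2 ≤ N - 1 := by
        rw [hD, Finset.mem_union, Finset.mem_Icc, Finset.mem_Icc] at heD
        omega
      obtain ⟨i, hi, hiy⟩ := hsurj q.1 hy'
      have hblt : (q.1 + N - q.2) % N < N := Nat.mod_lt _ hN
      obtain ⟨j, hj, hjb⟩ := hsurj ((q.1 + N - q.2) % N) hblt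
      have hrt : (q.1 + N - ((q.1 + N - q.2) % N)) % N = q.2 :=
        mod_roundtrip hN hy' he1.1 (by omega)
      refine ⟨(i, j), ?_, ?_⟩
      · simp only [Finset.mem_filter, Finset.mem_product]
        refine ⟨⟨hi, hj⟩, ?_⟩
        have hcnd := (cond_iff hs hN h2s (hrevlt i hi) (hrevlt j hj)).mpr ?_
        · refine ⟨?_, ?_⟩
          · intro hEq
            have : rev2 M (i-1) = rev2 M (j-1) := by rw [hEq]
            exact hcnd.1 this
          · rw [hvdc i hi, hvdc j hj]
            exact hcnd.2
        · rw [hiy, hjb, hrt, ← hD]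
          exact heD
      · rw [hiy, hjb, hrt]
  rw [F, hcard, Finset.card_product, Finset.card_range, hDcard]
  have hKfloor : ((K:ℕ) : ℝ) = (⌊s⌋ : ℝ) := by
    have h1 : ((⌊s⌋₊ : ℕ) : ℤ) = ⌊s⌋ := by
      rw [← Int.floor_toNat s, Int.toNat_of_nonneg (Int.floor_nonneg.mpr hs)]
    rw [hK]
    exact_mod_cast congrArg (fun z : ℤ => (z:ℝ)) h1
  push_cast
  rw [← hKfloor]
  field_simp
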